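/- Let F4 = {K_3, P_4}. Then c_1(F4) = g_1(F4) = 2, c_2(F4) = g_2(F4) = 3, and c_k(F4) = g_k(F4) = 2k − 2 for every integer k ≥ 3. In particular, F4 is k-nice for every positive integer k. -/

import Mathlib

open SimpleGraph

/-- A monochromatic copy of `H` in `G` under the edge `k`-coloring `col`:
an injective map sending edges of `H` to edges of `G`, all of the same color. -/
def HasMonoCopy {V : Type*} {W : Type*} {k : ℕ} (G : SimpleGraph V)
    (col : Sym2 V → Fin k) (H : SimpleGraph W) : Prop :=
  ∃ (i : Fin k) (f : W ↪ V), ∀ a b : W, H.Adj a b →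
    G.Adj (f a) (f b) ∧ col s(f a, f b) = i

/-- A family of graphs. -/
abbrev GraphFam : Type 1 := Set ((W : Type) × SimpleGraph W)

/-- The coloring `col` of (the edges of) `G` contains no monochromatic copy of
any member of the family `F`. -/
def AvoidsFam {V : Type} {k : ℕ} (G : SimpleGraph V)
    (col : Sym2 V → Fin k) (F : GraphFam) : Prop :=
  ∀ H ∈ F, ¬ HasMonoCopy G col H.2

/-- The set of integers `s` such that the complete graph `K_s` admits a
`k`-coloring of its edges with no monochromatic copy of any member of `F`.
`c_k(F)` is the greatest element of this set. -/
def cSet (k : ℕ) (F : GraphFam) : Set ℕ :=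
  {s | ∃ col : Sym2 (Fin s) → Fin k,
    AvoidsFam (⊤ : SimpleGraph (Fin s)) col F}

/-- The set of integers `s` such that some finite graph `G` with chromatic number `s`
admits a `k`-coloring of its edges with no monochromatic copy of any member of `F`.
`g_k(F)` is the greatest element of this set. -/
def gSet (k : ℕ) (F : GraphFam) : Set ℕ :=
  {s | ∃ (V : Type) (_ : Fintype V) (G : SimpleGraph V)
    (col : Sym2 V → Fin k), G.chromaticNumber = (s : ℕ∞) ∧ AvoidsFam G col F}

/-- The family `F₄ = {K₃, P₄}`. -/
def F4 : GraphFam :=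
  {⟨Fin 3, (⊤ : SimpleGraph (Fin 3))⟩, ⟨Fin 4, pathGraph 4⟩}


lemma avoids_of_center {V : Type} {k : ℕ} (G : SimpleGraph V) (col : Sym2 V → Fin k)
    (φ : V → Fin k)
    (hA : ∀ u x y : V, x ≠ y → x ≠ u → y ≠ u →
      col s(u, x) = col s(u, y) → col s(u, x) = φ u)
    (hB : ∀ u v : V, u ≠ v → ¬(col s(u, v) = φ u ∧ col s(u, v) = φ v)) :
    AvoidsFam G col F4 := by
  intro H hH
  simp only [F4, Set.mem_insert_iff, Set.mem_singleton_iff] at hH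
  rcases hH with rfl | rfl
  · rintro ⟨i, f, hf⟩
    have h01 := hf 0 1 (by simp)
    have h02 := hf 0 2 (by simp)
    have h12 := hf 1 2 (by simp)
    have ne01 : f 0 ≠ f 1 := fun h => by simpa using f.injective h
    have ne02 : f 0 ≠ f 2 := fun h => by simpa using f.injective h
    have ne12 : f 1 ≠ f 2 := fun h => by simpa using f.injective h
    have hu : col s(f 0, f 1) = φ (f 0) :=
      hA (f 0) (f 1) (f 2) ne12 ne01.symm ne02.symm (h01.2.trans h02.2.symm)
    have hv : col s(f 0, f 1) = φ (f 1) := by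
      have : col s(f 1, f 0) = φ (f 1) :=
        hA (f 1) (f 0) (f 2) ne02 ne01 ne12.symm
          (by rw [Sym2.eq_swap]; exact h01.2.trans h12.2.symm)
      rwa [Sym2.eq_swap] at this
    exact hB (f 0) (f 1) ne01 ⟨hu, hv⟩
  · rintro ⟨i, f, hf⟩
    have h01 := hf 0 1 (by rw [pathGraph_adj]; omega)
    have h12 := hf 1 2 (by rw [pathGraph_adj]; omega)
    have h23 := hf 2 3 (by rw [pathGraph_adj]; omega)
    have ne01 : f 0 ≠ f 1 := fun h => by simpa using f.injective h
    have ne02 : f 0 ≠ f 2 := fun h => by simpa using f.injective h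
    have ne13 : f 1 ≠ f 3 := fun h => by simpa using f.injective h
    have ne12 : f 1 ≠ f 2 := fun h => by simpa using f.injective h
    have ne23 : f 2 ≠ f 3 := fun h => by simpa using f.injective h
    have hu : col s(f 1, f 2) = φ (f 1) :=
      hA (f 1) (f 2) (f 0) ne02.symm ne12.symm ne01
        (by rw [show s(f 1, f 0) = s(f 0, f 1) from Sym2.eq_swap];
            exact h12.2.trans h01.2.symm)
    have hv : col s(f 1, f 2) = φ (f 2) := by
      have : col s(f 2, f 1) = φ (f 2) :=
        hA (f 2) (f 1) (f 3) ne13 ne12 ne23.symm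
          (by rw [Sym2.eq_swap]; exact h12.2.trans h23.2.symm)
      rwa [Sym2.eq_swap] at this
    exact hB (f 1) (f 2) ne12 ⟨hu, hv⟩

section Constr
variable (k : ℕ)

/-- value of the coloring on an ordered pair of naturals -/
def colv (a b : ℕ) : ℕ :=
  if a / 2 = b / 2 then k - 1
  else if a % 2 = b % 2 then min (a / 2) (b / 2) else max (a / 2) (b / 2)

lemma colv_symm (a b : ℕ) : colv k a b = colv k b a := by
  unfold colv; split_ifs <;> omega

lemma colv_lt (hk : 1 ≤ k) (a b : ℕ) (_ : a < 2 * k - 2) (_ : b < 2 * k - 2) : colv k a b < k := by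
  unfold colv; split_ifs <;> omega

lemma natA (a b d : ℕ) (ha : a < 2*k-2) (hb : b < 2*k-2) (hd : d < 2*k-2)
    (hbd : b ≠ d) (hba : b ≠ a) (hda : d ≠ a) (h : colv k a b = colv k a d) :
    colv k a b = a / 2 := by
  unfold colv at *; split_ifs at * <;> omega

lemma natB (a b : ℕ) (ha : a < 2*k-2) (hb : b < 2*k-2) (hab : a ≠ b) :
    ¬ (colv k a b = a / 2 ∧ colv k a b = b / 2) := by
  unfold colv; split_ifs <;> omega

end Constr

section Memb

/-- The coloring of `K_{2k-2}` witnessing the lower bound for `k ≥ 3`. -/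
noncomputable def kcol (k : ℕ) (hk : 3 ≤ k) : Sym2 (Fin (2*k-2)) → Fin k :=
  Sym2.lift ⟨fun u v => ⟨colv k u v, colv_lt k (by omega) _ _ u.isLt v.isLt⟩,
    fun u v => by simp [Fin.ext_iff, colv_symm k u v]⟩

lemma kcol_avoids (k : ℕ) (hk : 3 ≤ k) :
    AvoidsFam (⊤ : SimpleGraph (Fin (2*k-2))) (kcol k hk) F4 := by
  refine avoids_of_center _ _ (fun u => ⟨(u : ℕ)/2, by have := u.isLt; omega⟩) ?_ ?_
  · intro u x y hxy hxu hyu h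
    simp only [kcol, Sym2.lift_mk, Fin.ext_iff] at h ⊢
    exact natA k u x y u.isLt x.isLt y.isLt
      (fun hh => hxy (Fin.ext hh)) (fun hh => hxu (Fin.ext hh)) (fun hh => hyu (Fin.ext hh)) h
  · intro u v huv h
    simp only [kcol, Sym2.lift_mk, Fin.ext_iff] at h
    exact natB k u v u.isLt v.isLt (fun hh => huv (Fin.ext hh)) h

/-- the 2-coloring of `K₃`. -/
def col2 : Sym2 (Fin 3) → Fin 2 :=
  Sym2.lift ⟨fun u v => if u = 0 ∨ v = 0 then 0 else 1, by intro a b; simp [or_comm]⟩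

lemma col2_avoids : AvoidsFam (⊤ : SimpleGraph (Fin 3)) col2 F4 := by
  intro H hH
  simp only [F4, Set.mem_insert_iff, Set.mem_singleton_iff] at hH
  rcases hH with rfl | rfl
  · rintro ⟨i, f, hf⟩
    have key : ∀ a b : Fin 3, a ≠ b → col2 s(f a, f b) = i := by
      intro a b h
      exact (hf a b (by simpa using h)).2
    have hsurj : Function.Surjective f := by
      have := Finite.injective_iff_surjective.mp f.injective
      exact this
    obtain ⟨a, ha⟩ := hsurj 0
    have hother : ∀ b c : Fin 3, b ≠ a → c ≠ a → b ≠ c → False := by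
      intro b c hba hca hbc
      have h1 : col2 s(f a, f b) = i := key a b (Ne.symm hba)
      have h2 : col2 s(f b, f c) = i := key b c hbc
      have hfb : f b ≠ 0 := by rw [← ha]; exact fun h => hba (f.injective h)
      have hfc : f c ≠ 0 := by rw [← ha]; exact fun h => hca (f.injective h)
      have e1 : col2 s(f a, f b) = 0 := by
        rw [col2, Sym2.lift_mk]
        show (if f a = 0 ∨ f b = 0 then (0 : Fin 2) else 1) = 0
        rw [if_pos (Or.inl ha)]
      have e2 : col2 s(f b, f c) = 1 := by
        rw [col2, Sym2.lift_mk]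
        show (if f b = 0 ∨ f c = 0 then (0 : Fin 2) else 1) = 1
        rw [if_neg (by simp [hfb, hfc])]
      rw [e1] at h1; rw [e2] at h2
      rw [← h2] at h1
      exact absurd h1 (by decide)
    fin_cases a
    · exact hother 1 2 (by decide) (by decide) (by decide)
    · exact hother 0 2 (by decide) (by decide) (by decide)
    · exact hother 0 1 (by decide) (by decide) (by decide)
  · rintro ⟨i, f, hf⟩
    have := Fintype.card_le_of_embedding f
    simp at this
/-- the trivial 1-coloring of `K₂`. -/
def col1 : Sym2 (Fin 2) → Fin 1 := fun _ => 0

lemma col1_avoids : AvoidsFam (⊤ : SimpleGraph (Fin 2)) col1 F4 := by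
  intro H hH
  simp only [F4, Set.mem_insert_iff, Set.mem_singleton_iff] at hH
  rcases hH with rfl | rfl
  · rintro ⟨i, f, hf⟩
    have := Fintype.card_le_of_embedding f
    simp at this
  · rintro ⟨i, f, hf⟩
    have := Fintype.card_le_of_embedding f
    simp at this

end Memb

section Core

open Finset

/-- The key local property: no edge both of whose endpoints have another
edge of the same color. -/
def Key {V : Type} {k : ℕ} (G : SimpleGraph V) (col : Sym2 V → Fin k) : Prop :=
  ∀ ⦃u v x y : V⦄, G.Adj u v → G.Adj u x → G.Adj v y → x ≠ v → y ≠ u →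
    col s(u, v) = col s(u, x) → col s(u, v) = col s(v, y) → False

lemma key_of_avoids {V : Type} {k : ℕ} {G : SimpleGraph V} {col : Sym2 V → Fin k}
    (h : AvoidsFam G col F4) : Key G col := by
  intro u v x y huv hux hvy hxv hyu h1 h2
  by_cases hxy : x = y
  · -- triangle u v x
    subst hxy
    have hvx : G.Adj v x := hvy
    have hne1 : u ≠ v := huv.ne
    have hne2 : u ≠ x := hux.ne
    have hne3 : v ≠ x := fun hh => hxv hh.symm
    apply h ⟨Fin 3, (⊤ : SimpleGraph (Fin 3))⟩ (Set.mem_insert _ _)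
    refine ⟨col s(u, v),
      ⟨fun a => if (a : ℕ) = 0 then u else if (a : ℕ) = 1 then v else x, ?_⟩, ?_⟩
    · intro a b hab
      fin_cases a <;> fin_cases b <;> simp_all
    · intro a b hab
      fin_cases a <;> fin_cases b <;>
        first
          | exact ⟨huv, rfl⟩
          | exact ⟨huv.symm, congrArg col Sym2.eq_swap⟩
          | exact ⟨hux, h1.symm⟩
          | exact ⟨hux.symm, (congrArg col Sym2.eq_swap).trans h1.symm⟩
          | exact ⟨hvx, h2.symm⟩
          | exact ⟨hvx.symm, (congrArg col Sym2.eq_swap).trans h2.symm⟩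
          | (simp at hab)
  · -- path x u v y
    have hne1 : x ≠ u := hux.ne'
    have hne2 : u ≠ v := huv.ne
    have hne3 : v ≠ y := hvy.ne
    have hne4 : u ≠ y := fun hh => hyu hh.symm
    apply h ⟨Fin 4, pathGraph 4⟩ (Set.mem_insert_of_mem _ rfl)
    refine ⟨col s(u, v),
      ⟨fun a => if (a : ℕ) = 0 then x else if (a : ℕ) = 1 then u else
        if (a : ℕ) = 2 then v else y, ?_⟩, ?_⟩
    · intro a b hab
      fin_cases a <;> fin_cases b <;> simp_all
    · intro a b hab
      fin_cases a <;> fin_cases b <;>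
        first
          | exact ⟨hux.symm, (congrArg col Sym2.eq_swap).trans h1.symm⟩
          | exact ⟨hux, h1.symm⟩
          | exact ⟨huv, rfl⟩
          | exact ⟨huv.symm, congrArg col Sym2.eq_swap⟩
          | exact ⟨hvy, h2.symm⟩
          | exact ⟨hvy.symm, (congrArg col Sym2.eq_swap).trans h2.symm⟩
          | (rw [pathGraph_adj] at hab; simp at hab)

lemma core (k t : ℕ) (hk : k < t) (ht : 2 * (k - 1) ≤ t) :
    ∀ (n : ℕ) (V : Type) [Fintype V] (G : SimpleGraph V) (col : Sym2 V → Fin k),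
      Fintype.card V = n → Key G col → G.Colorable t := by
  intro n
  induction n using Nat.strong_induction_on with
  | _ n IH =>
  intro V hV G col hcard hkey
  haveI : DecidableEq V := Classical.decEq V
  haveI : DecidableRel G.Adj := Classical.decRel _
  by_cases hdeg : ∃ v : V, G.degree v < t
  · -- greedy extension
    obtain ⟨v, hv⟩ := hdeg
    have hn : 0 < n := hcard ▸ Fintype.card_pos_iff.mpr ⟨v⟩
    set V' := {u : V // u ≠ v} with hV'
    let G' : SimpleGraph V' := G.comap (Function.Embedding.subtype _)
    let col' : Sym2 V' → Fin k := fun e => col (e.map (Subtype.val))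
    have hcard' : Fintype.card V' = n - 1 := by
      rw [Fintype.card_subtype_compl, Fintype.card_subtype_eq, hcard]
    have hkey' : Key G' col' := by
      intro a b c e hab hac hbe hcb heu hc1 hc2
      refine hkey (u := a.1) (v := b.1) (x := c.1) (y := e.1) hab hac hbe
        (fun hh => hcb (Subtype.ext hh)) (fun hh => heu (Subtype.ext hh)) ?_ ?_
      · simpa [col', Sym2.map_pair_eq] using hc1
      · simpa [col', Sym2.map_pair_eq] using hc2
    obtain ⟨C⟩ := IH (n - 1) (by omega) V' G' col' hcard' hkey'
    -- pick a color unused on the neighborhood of v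
    set S : Finset (Fin t) :=
      (G.neighborFinset v).attach.image
        (fun u => C ⟨u.1, ((SimpleGraph.mem_neighborFinset _ _ _).mp u.2).ne'⟩) with hS
    have hScard : S.card < t := by
      calc S.card ≤ (G.neighborFinset v).attach.card := Finset.card_image_le
      _ = G.degree v := by rw [Finset.card_attach]; rfl
      _ < t := hv
    have hcompl : (Sᶜ : Finset (Fin t)).Nonempty := by
      rw [← Finset.card_pos, Finset.card_compl]
      simp only [Fintype.card_fin]
      omega
    obtain ⟨c, hc⟩ := hcompl
    rw [Finset.mem_compl] at hc
    refine ⟨SimpleGraph.Coloring.mk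
      (fun u => if h : u = v then c else C ⟨u, h⟩) ?_⟩
    intro a b hab
    by_cases ha : a = v
    · subst ha
      have hb : b ≠ a := hab.ne'
      simp only [dif_pos rfl, dif_neg hb]
      intro hcontra
      apply hc
      rw [hS, Finset.mem_image]
      exact ⟨⟨b, (SimpleGraph.mem_neighborFinset _ _ _).mpr hab⟩,
        Finset.mem_attach _ _, hcontra.symm⟩
    · by_cases hb : b = v
      · subst hb
        have ha' : a ≠ b := hab.ne
        simp only [dif_pos rfl, dif_neg ha']
        intro hcontra
        apply hc
        rw [hS, Finset.mem_image]
        exact ⟨⟨a, (SimpleGraph.mem_neighborFinset _ _ _).mpr hab.symm⟩,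
          Finset.mem_attach _ _, hcontra⟩
      · simp only [dif_neg ha, dif_neg hb]
        exact C.valid (by exact hab : G'.Adj ⟨a, ha⟩ ⟨b, hb⟩)
  · -- counting case
    push_neg at hdeg
    by_cases hn0 : n = 0
    · haveI : IsEmpty V := Fintype.card_eq_zero_iff.mp (by omega)
      exact SimpleGraph.Colorable.of_isEmpty (G := G) t
    have hn : 0 < n := Nat.pos_of_ne_zero hn0
    -- color degrees
    set d : V → Fin k → ℕ :=
      fun v i => ((G.neighborFinset v).filter (fun u => col s(v, u) = i)).card with hd
    have hdeg_sum : ∀ v : V, G.degree v = ∑ i : Fin k, d v i := by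
      intro v
      exact Finset.card_eq_sum_card_fiberwise
        (f := fun u => col s(v, u)) (t := Finset.univ) (fun x _ => Finset.mem_univ _)
    have noBoth : ∀ {u v : V}, G.Adj u v →
        2 ≤ d u (col s(u, v)) → 2 ≤ d v (col s(u, v)) → False := by
      intro u v huv h1 h2
      simp only [hd] at h1 h2
      obtain ⟨x, hx, hxv⟩ := Finset.exists_mem_ne
        (show 1 < ((G.neighborFinset u).filter
          (fun w => col s(u, w) = col s(u, v))).card by omega) v
      obtain ⟨y, hy, hyu⟩ := Finset.exists_mem_ne
        (show 1 < ((G.neighborFinset v).filter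
          (fun w => col s(v, w) = col s(u, v))).card by omega) u
      rw [Finset.mem_filter, SimpleGraph.mem_neighborFinset] at hx hy
      exact hkey huv hx.1 hy.1 hxv hyu hx.2.symm hy.2.symm
    set bigN : V → Finset V :=
      fun v => (G.neighborFinset v).filter (fun u => 2 ≤ d v (col s(v, u))) with hbigN
    set smallN : V → Finset V :=
      fun v => (G.neighborFinset v).filter (fun u => ¬ 2 ≤ d v (col s(v, u))) with hsmallN
    set B : V → ℕ :=
      fun v => (Finset.univ.filter (fun i : Fin k => 2 ≤ d v i)).card with hB
    have hsplit : ∀ v : V, (bigN v).card + (smallN v).card = G.degree v := by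
      intro v
      exact Finset.card_filter_add_card_filter_not _
    -- every vertex has a big color
    have hBv1 : ∀ v : V, 1 ≤ B v := by
      intro v
      by_contra hcon
      have hB0 : B v = 0 := by omega
      have hall : ∀ i : Fin k, d v i ≤ 1 := by
        intro i
        by_contra hcon2
        have : i ∈ Finset.univ.filter (fun i : Fin k => 2 ≤ d v i) := by
          simp only [Finset.mem_filter, Finset.mem_univ, true_and]; omega
        rw [Finset.card_eq_zero.mp hB0] at this
        exact absurd this (Finset.notMem_empty _)
      have hdk : G.degree v ≤ k := by
        rw [hdeg_sum v]
        calc ∑ i : Fin k, d v i ≤ ∑ _i : Fin k, 1 := Finset.sum_le_sum (fun i _ => hall i)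
        _ = k := by simp
      have hdt := hdeg v
      omega
    -- smallN bound
    have hsmall_bound : ∀ v : V, (smallN v).card ≤ k - B v := by
      intro v
      have hmap : ∀ u ∈ smallN v,
          col s(v, u) ∈ Finset.univ.filter (fun i : Fin k => ¬ 2 ≤ d v i) := by
        intro u hu
        rw [hsmallN, Finset.mem_filter] at hu
        simp only [Finset.mem_filter, Finset.mem_univ, true_and]
        exact hu.2
      have hinj : Set.InjOn (fun u => col s(v, u)) (smallN v : Set V) := by
        intro a ha b hb hab
        rw [Finset.mem_coe, hsmallN, Finset.mem_filter] at ha hb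
        have hcard1 : d v (col s(v, a)) ≤ 1 := by have := ha.2; omega
        have hamem : a ∈ (G.neighborFinset v).filter
            (fun u => col s(v, u) = col s(v, a)) := by
          rw [Finset.mem_filter]; exact ⟨ha.1, rfl⟩
        have hbmem : b ∈ (G.neighborFinset v).filter
            (fun u => col s(v, u) = col s(v, a)) := by
          rw [Finset.mem_filter]; exact ⟨hb.1, hab.symm⟩
        exact Finset.card_le_one.mp hcard1 a hamem b hbmem
      have := Finset.card_le_card_of_injOn _ hmap hinj
      have hcompl : (Finset.univ.filter (fun i : Fin k => ¬ 2 ≤ d v i)).card = k - B v := by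
        have h2 := Finset.card_filter_add_card_filter_not
          (s := (Finset.univ : Finset (Fin k))) (p := fun i : Fin k => 2 ≤ d v i)
        simp only [Finset.card_univ, Fintype.card_fin] at h2
        simp only [hB]
        omega
      omega
    -- big sum ≤ E
    set E : ℕ := G.edgeFinset.card with hE
    set sigmaSet : Finset ((_ : V) × V) :=
      (Finset.univ : Finset V).sigma (fun v => bigN v) with hsigma
    have hsigma_card : sigmaSet.card = ∑ v : V, (bigN v).card := Finset.card_sigma _ _
    have hmem_sigma : ∀ p : (_ : V) × V, p ∈ sigmaSet ↔
        (G.Adj p.1 p.2 ∧ 2 ≤ d p.1 (col s(p.1, p.2))) := by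
      intro p
      rw [hsigma, Finset.mem_sigma, hbigN, Finset.mem_filter,
        SimpleGraph.mem_neighborFinset]
      simp only [Finset.mem_univ, true_and]
    have hsigma_inj : Set.InjOn (fun p : (_ : V) × V => s(p.1, p.2)) (sigmaSet : Set _) := by
      rintro ⟨a1, a2⟩ ha ⟨b1, b2⟩ hb hab
      rw [Finset.mem_coe, hmem_sigma] at ha hb
      simp only [Sym2.eq, Sym2.rel_iff', Prod.swap_prod_mk, Prod.mk.injEq] at hab
      rcases hab with h12 | h12
      · rw [h12.1, h12.2]
      · exfalso
        rw [h12.1, h12.2] at ha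
        have hcol : col s(b2, b1) = col s(b1, b2) := congrArg col Sym2.eq_swap
        rw [hcol] at ha
        exact noBoth hb.1 hb.2 ha.2
    have hsigma_maps : ∀ p ∈ sigmaSet, s(p.1, p.2) ∈ G.edgeFinset := by
      intro p hp
      rw [SimpleGraph.mem_edgeFinset, SimpleGraph.mem_edgeSet]
      exact ((hmem_sigma p).mp hp).1
    have hbig_le : ∑ v : V, (bigN v).card ≤ E := by
      rw [← hsigma_card]
      exact Finset.card_le_card_of_injOn _ hsigma_maps hsigma_inj
    -- numeric facts
    have hdeg2E : ∑ v : V, G.degree v = 2 * E := G.sum_degrees_eq_twice_card_edges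
    have hnt : n * t ≤ 2 * E := by
      rw [← hdeg2E]
      calc n * t = ∑ _v : V, t := by rw [Finset.sum_const, Finset.card_univ, hcard, smul_eq_mul]
      _ ≤ ∑ v : V, G.degree v := Finset.sum_le_sum (fun v _ => hdeg v)
    have hsum_split : ∑ v : V, (bigN v).card + ∑ v : V, (smallN v).card = 2 * E := by
      rw [← Finset.sum_add_distrib, ← hdeg2E]
      exact Finset.sum_congr rfl (fun v _ => hsplit v)
    have hsmall_le : ∑ v : V, (smallN v).card ≤ ∑ v : V, (k - B v) :=
      Finset.sum_le_sum (fun v _ => hsmall_bound v)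
    have hT_le : ∑ v : V, (k - B v) ≤ n * (k - 1) := by
      calc ∑ v : V, (k - B v) ≤ ∑ _v : V, (k - 1) :=
        Finset.sum_le_sum (fun v _ => Nat.sub_le_sub_left (hBv1 v) k)
      _ = n * (k - 1) := by rw [Finset.sum_const, Finset.card_univ, hcard, smul_eq_mul]
    have h2M : 2 * (n * (k - 1)) ≤ n * t := by
      calc 2 * (n * (k - 1)) = n * (2 * (k - 1)) := by ring
      _ ≤ n * t := Nat.mul_le_mul_left n ht
    -- equalities
    have hA_eq : ∑ v : V, (bigN v).card = E := by omega
    have hT_eq : ∑ v : V, (k - B v) = n * (k - 1) := by omega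
    have hBv_eq : ∀ v : V, B v = 1 := by
      have hle : ∀ v ∈ (Finset.univ : Finset V), k - B v ≤ k - 1 :=
        fun v _ => Nat.sub_le_sub_left (hBv1 v) k
      have : ∀ v ∈ (Finset.univ : Finset V), k - B v = k - 1 := by
        rw [← Finset.sum_eq_sum_iff_of_le hle]
        rw [hT_eq, Finset.sum_const, Finset.card_univ, hcard, smul_eq_mul]
      intro v
      have h1 := this v (Finset.mem_univ v)
      have h2 := hBv1 v
      have h3 : B v ≤ k := by
        calc B v ≤ (Finset.univ : Finset (Fin k)).card := Finset.card_filter_le _ _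
        _ = k := by simp
      omega
    -- cover: every edge has a big endpoint
    have hcover : ∀ e ∈ G.edgeFinset, ∃ p ∈ sigmaSet, s(p.1, p.2) = e := by
      have himg : sigmaSet.image (fun p : (_ : V) × V => s(p.1, p.2)) = G.edgeFinset := by
        apply Finset.eq_of_subset_of_card_le
        · intro e he
          rw [Finset.mem_image] at he
          obtain ⟨p, hp, rfl⟩ := he
          exact hsigma_maps p hp
        · rw [Finset.card_image_of_injOn hsigma_inj, hsigma_card, hA_eq]
      intro e he
      rw [← himg, Finset.mem_image] at he
      obtain ⟨p, hp, hpe⟩ := he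
      exact ⟨p, hp, hpe⟩
    -- the home color
    have hhome : ∀ v : V, ∃ i : Fin k, Finset.univ.filter (fun i : Fin k => 2 ≤ d v i) = {i} :=
      fun v => Finset.card_eq_one.mp (hBv_eq v)
    choose hom hhom using hhome
    have hbig_iff : ∀ (v : V) (i : Fin k), 2 ≤ d v i ↔ i = hom v := by
      intro v i
      constructor
      · intro hi
        have : i ∈ Finset.univ.filter (fun i : Fin k => 2 ≤ d v i) := by
          simp only [Finset.mem_filter, Finset.mem_univ, true_and]; exact hi
        rw [hhom v, Finset.mem_singleton] at this
        exact this
      · intro hi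
        subst hi
        have : hom v ∈ Finset.univ.filter (fun i : Fin k => 2 ≤ d v i) := by
          rw [hhom v]; exact Finset.mem_singleton_self _
        rw [Finset.mem_filter] at this
        exact this.2
    -- hom is a proper coloring
    have hproper : ∀ {a b : V}, G.Adj a b → hom a ≠ hom b := by
      intro a b hab heq
      have he : s(a, b) ∈ G.edgeFinset := by
        rw [SimpleGraph.mem_edgeFinset, SimpleGraph.mem_edgeSet]; exact hab
      obtain ⟨⟨p1, p2⟩, hp, hpe⟩ := hcover _ he
      rw [hmem_sigma] at hp
      dsimp only at hp hpe
      simp only [Sym2.eq, Sym2.rel_iff', Prod.swap_prod_mk, Prod.mk.injEq] at hpe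
      rcases hpe with h12 | h12
      · rw [h12.1, h12.2] at hp
        have hba : col s(a, b) = hom a := (hbig_iff _ _).mp hp.2
        have hbb : 2 ≤ d b (col s(a, b)) := by
          rw [hbig_iff, hba, heq]
        exact noBoth hab hp.2 hbb
      · rw [h12.1, h12.2] at hp
        have hba : col s(b, a) = hom b := (hbig_iff _ _).mp hp.2
        have hbb : 2 ≤ d a (col s(b, a)) := by
          rw [hbig_iff, hba]; exact heq.symm
        exact noBoth hab.symm hp.2 hbb
    have : G.Colorable k := ⟨SimpleGraph.Coloring.mk hom hproper⟩
    exact this.mono hk.le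

end Core

section Glue

lemma gSet_le (k t : ℕ) (hk : k < t) (ht : 2 * (k - 1) ≤ t) :
    ∀ s ∈ gSet k F4, s ≤ t := by
  rintro s ⟨V, hV, G, col, hchrom, havoid⟩
  haveI := hV
  have hcol : G.Colorable t :=
    core k t hk ht (Fintype.card V) V G col rfl (key_of_avoids havoid)
  have hle : G.chromaticNumber ≤ (t : ℕ∞) :=
    SimpleGraph.chromaticNumber_le_iff_colorable.mpr hcol
  rw [hchrom] at hle
  exact_mod_cast hle

lemma cSet_subset_gSet (k : ℕ) : cSet k F4 ⊆ gSet k F4 := by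
  rintro s ⟨col, havoid⟩
  exact ⟨Fin s, inferInstance, ⊤, col,
    by rw [SimpleGraph.chromaticNumber_top]; simp, havoid⟩

lemma cSet_le (k t : ℕ) (hk : k < t) (ht : 2 * (k - 1) ≤ t) :
    ∀ s ∈ cSet k F4, s ≤ t :=
  fun s hs => gSet_le k t hk ht s (cSet_subset_gSet k hs)

end Glue


theorem stmt0 :
    IsGreatest (cSet 1 F4) 2 ∧ IsGreatest (gSet 1 F4) 2 ∧
    IsGreatest (cSet 2 F4) 3 ∧ IsGreatest (gSet 2 F4) 3 ∧
    ∀ k : ℕ, 3 ≤ k →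
      IsGreatest (cSet k F4) (2 * k - 2) ∧ IsGreatest (gSet k F4) (2 * k - 2) := by
  have hc1 : (2 : ℕ) ∈ cSet 1 F4 := ⟨col1, col1_avoids⟩
  have hc2 : (3 : ℕ) ∈ cSet 2 F4 := ⟨col2, col2_avoids⟩
  refine ⟨⟨hc1, cSet_le 1 2 (by omega) (by omega)⟩,
    ⟨cSet_subset_gSet 1 hc1, gSet_le 1 2 (by omega) (by omega)⟩,
    ⟨hc2, cSet_le 2 3 (by omega) (by omega)⟩,
    ⟨cSet_subset_gSet 2 hc2, gSet_le 2 3 (by omega) (by omega)⟩, ?_⟩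
  intro k hk
  have hck : (2 * k - 2 : ℕ) ∈ cSet k F4 := ⟨kcol k hk, kcol_avoids k hk⟩
  exact ⟨⟨hck, cSet_le k (2 * k - 2) (by omega) (by omega)⟩,
    ⟨cSet_subset_gSet k hck, gSet_le k (2 * k - 2) (by omega) (by omega)⟩⟩
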